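/- If an MDP M₁ has an acyclic unlabeled underlying graph, then there exists an MDP M₂ whose unlabeled underlying graph is a tree and which is bisimilar to M₁. -/

import Mathlib

open Classical
attribute [local instance 10] Classical.propDecidable

noncomputable section

universe u v w

/-- A sub-probability measure on a finite set `Q`. -/
structure SubProb (Q : Type u) [Fintype Q] where
  val : Q → ℝ
  nonneg : ∀ q, 0 ≤ val q
  sum_le_one : ∑ q, val q ≤ 1

namespace SubProb

variable {Q : Type u} {Q' : Type v} [Fintype Q] [Fintype Q']

/-- The measure of a set of states. -/
def mass (μ : SubProb Q) (A : Set Q) : ℝ := ∑ q, A.indicator μ.val q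

/-- The zero sub-probability measure. -/
def zero (Q : Type u) [Fintype Q] : SubProb Q :=
  ⟨fun _ => 0, fun _ => le_refl 0, by simp⟩

/-- Extension (by zero) of a sub-probability measure to a disjoint sum (left). -/
def toLeft (μ : SubProb Q) : SubProb (Q ⊕ Q') where
  val := Sum.elim μ.val fun _ => 0
  nonneg := by rintro (q | q); exacts [μ.nonneg q, le_refl 0]
  sum_le_one := by simpa [Fintype.sum_sum_type] using μ.sum_le_one

/-- Extension (by zero) of a sub-probability measure to a disjoint sum (right). -/
def toRight (μ : SubProb Q') : SubProb (Q ⊕ Q') where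
  val := Sum.elim (fun _ => 0) μ.val
  nonneg := by rintro (q | q); exacts [le_refl 0, μ.nonneg q]
  sum_le_one := by simpa [Fintype.sum_sum_type] using μ.sum_le_one

end SubProb

/-- The image of a set under a binary relation. -/
def relImage {A : Type u} {B : Type v} (R : A → B → Prop) (S : Set A) : Set B :=
  {b | ∃ a ∈ S, R a b}

/-- A set is `R`-closed if its image under `R` is itself. -/
def RClosed {Q : Type u} (R : Q → Q → Prop) (A : Set Q) : Prop := relImage R A = A

/-- `μ ≼_R μ'` : `μ'` simulates `μ` with respect to `R`. -/
def SubProb.simLE {Q : Type u} [Fintype Q] (R : Q → Q → Prop) (μ μ' : SubProb Q) : Prop :=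
  ∀ A : Set Q, RClosed R A → μ.mass A ≤ μ'.mass A

/-- `μ ≈_R μ'` : `μ` is equivalent to `μ'` with respect to `R`. -/
def SubProb.simEq {Q : Type u} [Fintype Q] (R : Q → Q → Prop) (μ μ' : SubProb Q) : Prop :=
  ∀ A : Set Q, RClosed R A → μ.mass A = μ'.mass A

/-- A (finite) Markov decision process over atomic propositions `AP`. -/
structure MDP (Q : Type u) [Fintype Q] (AP : Type w) where
  init : Q
  trans : Q → Finset (SubProb Q)
  trans_nonempty : ∀ q, (trans q).Nonempty
  label : Q → Set AP

variable {Q : Type u} {Q' : Type v} {AP : Type w} [Fintype Q] [Fintype Q']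

/-- A simulation relation on (the state space of) an MDP: a preorder such that related
states have the same labels and every transition of the smaller state is simulated. -/
def IsSimulation (M : MDP Q AP) (R : Q → Q → Prop) : Prop :=
  Reflexive R ∧ Transitive R ∧
    ∀ q q', R q q' → M.label q = M.label q' ∧
      ∀ μ ∈ M.trans q, ∃ μ' ∈ M.trans q', SubProb.simLE R μ μ'

/-- A bisimulation on (the state space of) an MDP. -/
def IsBisimulation (M : MDP Q AP) (R : Q → Q → Prop) : Prop :=
  Equivalence R ∧
    ∀ q q', R q q' → M.label q = M.label q' ∧
      ∀ μ ∈ M.trans q, ∃ μ' ∈ M.trans q', SubProb.simEq R μ μ'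

/-- The direct sum of two MDPs (with the initial state of the first as initial state). -/
def MDP.dsum (M : MDP Q AP) (M' : MDP Q' AP) : MDP (Q ⊕ Q') AP where
  init := Sum.inl M.init
  trans := fun x =>
    match x with
    | .inl q => (M.trans q).image SubProb.toLeft
    | .inr q => (M'.trans q).image SubProb.toRight
  trans_nonempty := by
    rintro (q | q)
    · exact (M.trans_nonempty q).image _
    · exact (M'.trans_nonempty q).image _
  label := Sum.elim M.label M'.label

/-- `M ≼ M'` : the MDP `M'` simulates the MDP `M`. -/
def MDP.Sim (M : MDP Q AP) (M' : MDP Q' AP) : Prop :=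
  ∃ R : (Q ⊕ Q') → (Q ⊕ Q') → Prop,
    IsSimulation (M.dsum M') R ∧ R (Sum.inl M.init) (Sum.inr M'.init)

/-- `M ≈ M'` : the MDPs `M` and `M'` are bisimilar. -/
def MDP.Bisim (M : MDP Q AP) (M' : MDP Q' AP) : Prop :=
  ∃ R : (Q ⊕ Q') → (Q ⊕ Q') → Prop,
    IsBisimulation (M.dsum M') R ∧ R (Sum.inl M.init) (Sum.inr M'.init)

/-- The canonical-form relation `id_Q ∪ R₁ ∪ id_{Q'}` on a disjoint sum. -/
def canonRel (R₁ : Q → Q' → Prop) : (Q ⊕ Q') → (Q ⊕ Q') → Prop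
  | .inl a, .inl b => a = b
  | .inl a, .inr b => R₁ a b
  | .inr _, .inl _ => False
  | .inr a, .inr b => a = b

/-- `R₁ ⊆ Q × Q'` is a canonical simulation of `M` by `M'`. -/
def IsCanonSim (M : MDP Q AP) (M' : MDP Q' AP) (R₁ : Q → Q' → Prop) : Prop :=
  IsSimulation (M.dsum M') (canonRel R₁)

/-- The edge relation of the unlabeled underlying graph of an MDP. -/
def MDP.edge (M : MDP Q AP) (q₁ q₂ : Q) : Prop :=
  ∃ μ ∈ M.trans q₁, 0 < μ.val q₂

/-- A sub-probability measure on `Q` viewed as a measure on `Q × Fin (k+1)`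
concentrated on level `j`. -/
def SubProb.toLevel {k : ℕ} (μ : SubProb Q) (j : Fin (k + 1)) : SubProb (Q × Fin (k + 1)) where
  val := fun x => if x.2 = j then μ.val x.1 else 0
  nonneg := by
    intro x; (try dsimp only); split
    · exact μ.nonneg x.1
    · exact le_refl 0
  sum_le_one := by
    rw [Fintype.sum_prod_type]
    simpa using μ.sum_le_one

/-- The `k`-th unrolling of an MDP rooted at `q`. States at level `j+1` transition to the
corresponding states at level `j`; states at level `0` have only the zero transition. -/
def MDP.unroll (M : MDP Q AP) (q : Q) (k : ℕ) : MDP (Q × Fin (k + 1)) AP where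
  init := (q, Fin.last k)
  trans := fun x =>
    if h : (x.2 : ℕ) = 0 then {SubProb.zero _}
    else (M.trans x.1).image fun μ =>
      μ.toLevel ⟨(x.2 : ℕ) - 1, Nat.lt_of_le_of_lt (Nat.sub_le _ _) x.2.isLt⟩
  trans_nonempty := by
    intro x; (try dsimp only); split
    · simp
    · exact (M.trans_nonempty x.1).image _
  label := fun x => M.label x.1
mutual
/-- The safety fragment of PCTL. -/
inductive SafeF (AP : Type w) : Type w
  | tt : SafeF AP
  | ff : SafeF AP
  | atom : AP → SafeF AP
  | natom : AP → SafeF AP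
  | and : SafeF AP → SafeF AP → SafeF AP
  | or : SafeF AP → SafeF AP → SafeF AP
  | pnextLt : (p : ℚ) → 0 ≤ p → p ≤ 1 → LiveF AP → SafeF AP
  | pnextLe : (p : ℚ) → 0 ≤ p → p ≤ 1 → LiveF AP → SafeF AP
  | puntilLt : (p : ℚ) → 0 ≤ p → p ≤ 1 → LiveF AP → LiveF AP → SafeF AP
  | puntilLe : (p : ℚ) → 0 ≤ p → p ≤ 1 → LiveF AP → LiveF AP → SafeF AP

/-- The liveness fragment of PCTL. -/
inductive LiveF (AP : Type w) : Type w
  | tt : LiveF AP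
  | ff : LiveF AP
  | atom : AP → LiveF AP
  | natom : AP → LiveF AP
  | and : LiveF AP → LiveF AP → LiveF AP
  | or : LiveF AP → LiveF AP → LiveF AP
  | nnextLt : (p : ℚ) → 0 ≤ p → p ≤ 1 → LiveF AP → LiveF AP
  | nnextLe : (p : ℚ) → 0 ≤ p → p ≤ 1 → LiveF AP → LiveF AP
  | nuntilLt : (p : ℚ) → 0 ≤ p → p ≤ 1 → LiveF AP → LiveF AP → LiveF AP
  | nuntilLe : (p : ℚ) → 0 ≤ p → p ≤ 1 → LiveF AP → LiveF AP → LiveF AP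
end

/-- A (history-dependent) scheduler for an MDP. -/
structure Sched (M : MDP Q AP) where
  choice : List Q → Q → SubProb Q
  valid : ∀ h q, choice h q ∈ M.trans q

/-- The probability, under scheduler `σ` with current history `h`, that an until property
`s1 U s2` is satisfied from `q` within `n` steps. -/
def untilProbN (M : MDP Q AP) (σ : Sched M) (s1 s2 : Set Q) : ℕ → List Q → Q → ℝ
  | 0, _, q => if q ∈ s2 then 1 else 0
  | n + 1, h, q =>
    if q ∈ s2 then 1
    else if q ∈ s1 then
      ∑ q', (σ.choice h q).val q' * untilProbN M σ s1 s2 n (h ++ [q]) q'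
    else 0

/-- The probability under scheduler `σ` that `s1 U s2` is satisfied from `q`. -/
def untilProb (M : MDP Q AP) (σ : Sched M) (s1 s2 : Set Q) (q : Q) : ℝ :=
  ⨆ n : ℕ, untilProbN M σ s1 s2 n [] q

mutual
/-- Satisfaction of safety formulas at a state of an MDP (under all schedulers). -/
def satS (M : MDP Q AP) : SafeF AP → Q → Prop
  | .tt, _ => True
  | .ff, _ => False
  | .atom a, q => a ∈ M.label q
  | .natom a, q => a ∉ M.label q
  | .and φ ψ, q => satS M φ q ∧ satS M ψ q
  | .or φ ψ, q => satS M φ q ∨ satS M ψ q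
  | .pnextLt p _ _ ψ, q => ∀ μ ∈ M.trans q, μ.mass {q' | satL M ψ q'} < (p : ℝ)
  | .pnextLe p _ _ ψ, q => ∀ μ ∈ M.trans q, μ.mass {q' | satL M ψ q'} ≤ (p : ℝ)
  | .puntilLt p _ _ ψ1 ψ2, q =>
    ∀ σ : Sched M, untilProb M σ {q' | satL M ψ1 q'} {q' | satL M ψ2 q'} q < (p : ℝ)
  | .puntilLe p _ _ ψ1 ψ2, q =>
    ∀ σ : Sched M, untilProb M σ {q' | satL M ψ1 q'} {q' | satL M ψ2 q'} q ≤ (p : ℝ)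

/-- Satisfaction of liveness formulas at a state of an MDP. -/
def satL (M : MDP Q AP) : LiveF AP → Q → Prop
  | .tt, _ => True
  | .ff, _ => False
  | .atom a, q => a ∈ M.label q
  | .natom a, q => a ∉ M.label q
  | .and φ ψ, q => satL M φ q ∧ satL M ψ q
  | .or φ ψ, q => satL M φ q ∨ satL M ψ q
  | .nnextLt p _ _ ψ, q => ¬ ∀ μ ∈ M.trans q, μ.mass {q' | satL M ψ q'} < (p : ℝ)
  | .nnextLe p _ _ ψ, q => ¬ ∀ μ ∈ M.trans q, μ.mass {q' | satL M ψ q'} ≤ (p : ℝ)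
  | .nuntilLt p _ _ ψ1 ψ2, q =>
    ¬ ∀ σ : Sched M, untilProb M σ {q' | satL M ψ1 q'} {q' | satL M ψ2 q'} q < (p : ℝ)
  | .nuntilLe p _ _ ψ1 ψ2, q =>
    ¬ ∀ σ : Sched M, untilProb M σ {q' | satL M ψ1 q'} {q' | satL M ψ2 q'} q ≤ (p : ℝ)
end
mutual
/-- Weak safety formulas: safety formulas using only `≤` probability bounds. -/
def SafeF.weak : SafeF AP → Prop
  | .tt => True
  | .ff => True
  | .atom _ => True
  | .natom _ => True
  | .and φ ψ => φ.weak ∧ ψ.weak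
  | .or φ ψ => φ.weak ∧ ψ.weak
  | .pnextLt _ _ _ _ => False
  | .pnextLe _ _ _ ψ => ψ.strict
  | .puntilLt _ _ _ _ _ => False
  | .puntilLe _ _ _ ψ1 ψ2 => ψ1.strict ∧ ψ2.strict

/-- Strict liveness formulas: liveness formulas using only `≤` probability bounds. -/
def LiveF.strict : LiveF AP → Prop
  | .tt => True
  | .ff => True
  | .atom _ => True
  | .natom _ => True
  | .and φ ψ => φ.strict ∧ ψ.strict
  | .or φ ψ => φ.strict ∧ ψ.strict
  | .nnextLt _ _ _ _ => False
  | .nnextLe _ _ _ ψ => ψ.strict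
  | .nuntilLt _ _ _ _ _ => False
  | .nuntilLe _ _ _ ψ1 ψ2 => ψ1.strict ∧ ψ2.strict
end

/-- An equivalence relation is compatible with an MDP if related states have equal labels. -/
def Compatible (M : MDP Q AP) (s : Setoid Q) : Prop :=
  ∀ q q', s.r q q' → M.label q = M.label q'

/-- The lifting of a sub-probability measure to the quotient:
`[μ]([q]) = μ([q])`. -/
def SubProb.lift (s : Setoid Q) (μ : SubProb Q) : SubProb (Quotient s) where
  val := fun a => ∑ q, if Quotient.mk s q = a then μ.val q else 0
  nonneg := by
    intro a
    apply Finset.sum_nonneg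
    intro q _
    split
    · exact μ.nonneg q
    · exact le_refl 0
  sum_le_one := by
    rw [Finset.sum_comm]
    simpa using μ.sum_le_one

/-- The abstract MDP of `M` with respect to an equivalence relation `s`. -/
def MDP.abst (M : MDP Q AP) (s : Setoid Q) : MDP (Quotient s) AP where
  init := Quotient.mk s M.init
  trans := fun a =>
    Finset.univ.biUnion fun q =>
      if Quotient.mk s q = a then (M.trans q).image (SubProb.lift s) else ∅
  trans_nonempty := by
    intro a
    obtain ⟨q, rfl⟩ := Quotient.exists_rep a
    obtain ⟨μ, hμ⟩ := M.trans_nonempty q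
    refine ⟨SubProb.lift s μ, Finset.mem_biUnion.2 ⟨q, Finset.mem_univ q, ?_⟩⟩
    rw [if_pos rfl]
    exact Finset.mem_image_of_mem _ hμ
  label := fun a => M.label a.out

/-- The abstraction relation `{(q, [q])}`. -/
def abstRel (s : Setoid Q) : Q → Quotient s → Prop := fun q a => Quotient.mk s q = a

/-- The refinement relation for `s' ⊆ s`: `[q]_{s'}` is related to `[q]_s` iff
`[q]_{s'} ⊆ [q]_s`, equivalently they share a common element. -/
def refineRel (s' s : Setoid Q) : Quotient s' → Quotient s → Prop := fun a' a =>
  ∃ q : Q, Quotient.mk s' q = a' ∧ Quotient.mk s q = a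

/-- `(E, R)` is a counterexample for the MDP `A` and safety formula `ψ`. -/
def IsCex {QA : Type v} [Fintype QA] (A : MDP QA AP) (ψ : SafeF AP) (E : MDP Q AP)
    (R : Q → QA → Prop) : Prop :=
  ¬ satS E ψ E.init ∧ IsCanonSim E A R

/-- Containment of MDPs (on a common state space): same initial state, same labels, and
each transition set injects into the corresponding one so that each transition agrees with
its image except possibly being zero. -/
def MDPContained (M' M : MDP Q AP) : Prop :=
  M'.init = M.init ∧ (∀ q, M'.label q = M.label q) ∧
    ∀ q, ∃ f : SubProb Q → SubProb Q, Set.InjOn f (M'.trans q) ∧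
      ∀ μ' ∈ M'.trans q, f μ' ∈ M.trans q ∧ ∀ q'', μ'.val q'' = (f μ').val q'' ∨ μ'.val q'' = 0

/-- A minimal counterexample. -/
def MinimalCex {QA : Type v} [Fintype QA] (A : MDP QA AP) (ψ : SafeF AP) (E : MDP Q AP)
    (R₀ : Q → QA → Prop) : Prop :=
  IsCex A ψ E R₀ ∧
    (∀ (E₁ : MDP Q AP) (R₁ : Q → QA → Prop),
      IsCex A ψ E₁ R₁ → MDPContained E₁ E → E₁ = E) ∧
    (∀ R₁ : Q → QA → Prop,
      IsCex A ψ E R₁ → (∀ e a, R₁ e a → R₀ e a) → R₁ = R₀)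

/-- The counterexample `(E, R₀)` for the abstraction `M/s` is valid and consistent with
`(M, s)`: there is a canonical (validating) simulation `R` of `E` by `M` with `α∘R ⊆ R₀`. -/
def ValidConsistent (M : MDP Q AP) (s : Setoid Q) {QE : Type v} [Fintype QE] (E : MDP QE AP)
    (R₀ : QE → Quotient s → Prop) : Prop :=
  ∃ R : QE → Q → Prop, IsCanonSim E M R ∧ ∀ e q, R e q → R₀ e (Quotient.mk s q)

/-- The underlying graph of an MDP is a tree rooted at `r`. -/
def IsTreeGraph {V : Type u} (E : V → V → Prop) (r : V) : Prop :=
  (∀ q, ¬ E q r) ∧ (∀ q, q ≠ r → ∃! p, E p q) ∧ ∀ q, Relation.ReflTransGen E r q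


namespace Stmt12Aux

variable {Q : Type u} {AP : Type w} [Fintype Q]

/-- Encoding of states into `Fin (card Q)`. -/
def enc (Q : Type u) [Fintype Q] : Q ≃ Fin (Fintype.card Q) := Fintype.equivFin Q

/-- Reversed paths from the initial state: head is the current state. -/
def IsPathF (M : MDP Q AP) (l : List (Fin (Fintype.card Q))) : Prop :=
  l ≠ [] ∧ l.getLast? = some (enc Q M.init) ∧
    l.Chain' (fun a b => M.edge ((enc Q).symm b) ((enc Q).symm a))

/-- The type of paths, in `Type 0`. -/
def PathQ (M : MDP Q AP) : Type := {l : List (Fin (Fintype.card Q)) // IsPathF M l}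

variable {M : MDP Q AP}

/-- Endpoint (current state) of a path. -/
def ep (p : PathQ M) : Q := (enc Q).symm (p.val.head p.2.1)

theorem val_eq (p : PathQ M) : p.val = (enc Q) (ep p) :: p.val.tail := by
  rw [ep, Equiv.apply_symm_apply, List.cons_head_tail]

theorem head_eq {α : Type*} {l : List α} {x : α} {t : List α} (hxt : l = x :: t)
    (h : l ≠ []) : l.head h = x := by subst hxt; rfl

theorem path_nodup {l : List (Fin (Fintype.card Q))}
    (hacyc : ∀ x : Q, ¬ Relation.TransGen (MDP.edge M) x x)
    (hl : IsPathF M l) : l.Nodup := by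
  have hchain : l.Chain' (fun a b => Relation.TransGen
      (fun u v : Fin (Fintype.card Q) => M.edge ((enc Q).symm u) ((enc Q).symm v)) b a) :=
    List.IsChain.imp (S := fun a b => Relation.TransGen
      (fun u v : Fin (Fintype.card Q) => M.edge ((enc Q).symm u) ((enc Q).symm v)) b a)
      (fun _ _ h => Relation.TransGen.single h) hl.2.2
  haveI : IsTrans (Fin (Fintype.card Q)) (fun a b => Relation.TransGen
      (fun u v : Fin (Fintype.card Q) => M.edge ((enc Q).symm u) ((enc Q).symm v)) b a) :=
    ⟨fun _ _ _ h1 h2 => Relation.TransGen.trans h2 h1⟩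
  have hpw := List.isChain_iff_pairwise.mp hchain
  refine List.Pairwise.imp ?_ hpw
  intro a b h hab
  subst hab
  exact hacyc ((enc Q).symm a) (h.lift (enc Q).symm fun _ _ hr => hr)

theorem path_len {l : List (Fin (Fintype.card Q))}
    (hacyc : ∀ x : Q, ¬ Relation.TransGen (MDP.edge M) x x)
    (hl : IsPathF M l) : l.length ≤ Fintype.card Q := by
  simpa using (path_nodup hacyc hl).length_le_card

/-- Finiteness of the path type (uses acyclicity). -/
def pathFintype (M : MDP Q AP) (hacyc : ∀ x : Q, ¬ Relation.TransGen (MDP.edge M) x x) :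
    Fintype (PathQ M) := by
  apply Fintype.ofInjective
    (fun p : PathQ M => (fun i : Fin (Fintype.card Q) => p.val[(i : ℕ)]?))
  intro p₁ p₂ h
  apply Subtype.ext
  apply List.ext_getElem?
  intro i
  by_cases hi : i < Fintype.card Q
  · exact congrFun h ⟨i, hi⟩
  · rw [List.getElem?_eq_none, List.getElem?_eq_none]
    · exact le_trans (path_len hacyc p₂.2) (le_of_not_gt hi)
    · exact le_trans (path_len hacyc p₁.2) (le_of_not_gt hi)

variable [Fintype (PathQ M)]

theorem ext_path (p : PathQ M) {q : Q} (h : M.edge (ep p) q) :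
    IsPathF M ((enc Q) q :: p.val) := by
  obtain ⟨hne, hlast, hchain⟩ := p.2
  obtain ⟨x, t, hxt⟩ := List.exists_cons_of_ne_nil hne
  refine ⟨List.cons_ne_nil _ _, ?_, ?_⟩
  · rw [hxt, List.getLast?_cons_cons, ← hxt]; exact hlast
  · rw [hxt]; unfold List.Chain'; rw [List.isChain_cons_cons, ← hxt]
    refine ⟨?_, hchain⟩
    rw [Equiv.symm_apply_apply]
    have hthis : ep p = (enc Q).symm x := by rw [ep, head_eq hxt]
    rwa [hthis] at h

theorem ep_ext (p : PathQ M) (q : Q) (h : IsPathF M ((enc Q) q :: p.val)) :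
    ep (⟨(enc Q) q :: p.val, h⟩ : PathQ M) = q := by
  simp [ep]

/-- Pushforward of a transition to children paths. -/
def pushP (p : PathQ M) (μ : SubProb Q) : SubProb (PathQ M) where
  val := fun pp => if pp.val.tail = p.val then μ.val (ep pp) else 0
  nonneg := by
    intro pp; split
    · exact μ.nonneg _
    · exact le_refl 0
  sum_le_one := by
    classical
    refine le_trans ?_ μ.sum_le_one
    rw [← Finset.sum_filter]
    have hinj : ∀ p₁ ∈ Finset.univ.filter (fun pp : PathQ M => pp.val.tail = p.val),
        ∀ p₂ ∈ Finset.univ.filter (fun pp : PathQ M => pp.val.tail = p.val),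
        ep p₁ = ep p₂ → p₁ = p₂ := by
      intro p₁ h₁ p₂ h₂ he
      rw [Finset.mem_filter] at h₁ h₂
      apply Subtype.ext
      rw [val_eq p₁, val_eq p₂, he, h₁.2, h₂.2]
    calc ∑ pp ∈ Finset.univ.filter (fun pp : PathQ M => pp.val.tail = p.val), μ.val (ep pp)
        = ∑ q ∈ (Finset.univ.filter (fun pp : PathQ M => pp.val.tail = p.val)).image ep,
            μ.val q := (Finset.sum_image hinj).symm
      _ ≤ ∑ q : Q, μ.val q :=
          Finset.sum_le_sum_of_subset_of_nonneg (Finset.subset_univ _)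
            (fun q _ _ => μ.nonneg q)

theorem sum_push_eq (p : PathQ M) {μ : SubProb Q} (hμ : μ ∈ M.trans (ep p)) (S : Set Q) :
    ∑ pp : PathQ M, (if ep pp ∈ S then (pushP p μ).val pp else 0)
      = ∑ q : Q, (if q ∈ S then μ.val q else 0) := by
  classical
  have hrw : ∀ pp : PathQ M, (if ep pp ∈ S then (pushP p μ).val pp else 0)
      = (if pp.val.tail = p.val then (if ep pp ∈ S then μ.val (ep pp) else 0) else 0) := by
    intro pp
    rw [pushP]
    by_cases h1 : ep pp ∈ S <;> by_cases h2 : pp.val.tail = p.val <;> simp [h1, h2]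
  rw [Finset.sum_congr rfl fun pp _ => hrw pp, ← Finset.sum_filter]
  have hinj : ∀ p₁ ∈ Finset.univ.filter (fun pp : PathQ M => pp.val.tail = p.val),
      ∀ p₂ ∈ Finset.univ.filter (fun pp : PathQ M => pp.val.tail = p.val),
      ep p₁ = ep p₂ → p₁ = p₂ := by
    intro p₁ h₁ p₂ h₂ he
    rw [Finset.mem_filter] at h₁ h₂
    apply Subtype.ext
    rw [val_eq p₁, val_eq p₂, he, h₁.2, h₂.2]
  rw [show (∑ pp ∈ Finset.univ.filter (fun pp : PathQ M => pp.val.tail = p.val),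
      (if ep pp ∈ S then μ.val (ep pp) else 0))
      = ∑ q ∈ (Finset.univ.filter (fun pp : PathQ M => pp.val.tail = p.val)).image ep,
        (if q ∈ S then μ.val q else 0) from
    (Finset.sum_image (f := fun q => if q ∈ S then μ.val q else 0) hinj).symm]
  apply Finset.sum_subset (Finset.subset_univ _)
  intro q _ hq
  by_cases hz : μ.val q = 0
  · simp [hz]
  · exfalso
    have hpos : 0 < μ.val q := lt_of_le_of_ne (μ.nonneg q) (Ne.symm hz)
    have hedge : M.edge (ep p) q := ⟨μ, hμ, hpos⟩
    have hpath := ext_path p hedge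
    refine hq (Finset.mem_image.mpr ⟨⟨(enc Q) q :: p.val, hpath⟩, ?_, ep_ext p q hpath⟩)
    exact Finset.mem_filter.mpr ⟨Finset.mem_univ _, rfl⟩

/-- The tree-unrolled MDP. -/
def M2 (M : MDP Q AP) [Fintype (PathQ M)] : MDP (PathQ M) AP where
  init := ⟨[(enc Q) M.init], by
    refine ⟨List.cons_ne_nil _ _, rfl, List.isChain_singleton _⟩⟩
  trans := fun p => (M.trans (ep p)).image (pushP p)
  trans_nonempty := fun p => (M.trans_nonempty _).image _
  label := fun p => M.label (ep p)

theorem edge_iff (p₁ p₂ : PathQ M) :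
    (M2 M).edge p₁ p₂ ↔ p₂.val.tail = p₁.val ∧ M.edge (ep p₁) (ep p₂) := by
  constructor
  · rintro ⟨ν, hν, hpos⟩
    obtain ⟨μ, hμ, rfl⟩ := Finset.mem_image.mp hν
    rw [pushP] at hpos
    dsimp only at hpos
    split at hpos
    · exact ⟨by assumption, μ, hμ, hpos⟩
    · exact absurd hpos (lt_irrefl 0)
  · rintro ⟨htail, μ, hμ, hpos⟩
    refine ⟨pushP p₁ μ, Finset.mem_image_of_mem _ hμ, ?_⟩
    rw [pushP]
    dsimp only
    rw [if_pos htail]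
    exact hpos

theorem tail_path {p : PathQ M} (hne : p.val.tail ≠ []) : IsPathF M p.val.tail := by
  obtain ⟨hne0, hlast, hchain⟩ := p.2
  obtain ⟨x, t, hxt⟩ := List.exists_cons_of_ne_nil hne0
  refine ⟨hne, ?_, hchain.tail⟩
  have htt : p.val.tail = t := by rw [hxt, List.tail_cons]
  obtain ⟨y, tt, hyt⟩ := List.exists_cons_of_ne_nil (htt ▸ hne)
  rw [htt, hyt]
  rw [hxt, hyt, List.getLast?_cons_cons] at hlast
  exact hlast

theorem eq_root {p : PathQ M} (h : p.val.tail = []) : p = (M2 M).init := by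
  obtain ⟨hne, hlast, _⟩ := p.2
  obtain ⟨x, t, hxt⟩ := List.exists_cons_of_ne_nil hne
  have ht : t = [] := by rw [hxt] at h; exact h
  subst ht
  apply Subtype.ext
  rw [hxt] at hlast ⊢
  simp only [List.getLast?_singleton, Option.some.injEq] at hlast
  rw [hlast]
  rfl

theorem edge_tail {p : PathQ M} (htne : p.val.tail ≠ []) :
    (M2 M).edge ⟨p.val.tail, tail_path htne⟩ p := by
  apply (edge_iff _ _).mpr
  refine ⟨rfl, ?_⟩
  obtain ⟨hne, hlast, hchain⟩ := p.2
  obtain ⟨x, t, hxt⟩ := List.exists_cons_of_ne_nil hne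
  have htt : p.val.tail = t := by rw [hxt, List.tail_cons]
  obtain ⟨y, tt, hyt⟩ := List.exists_cons_of_ne_nil (htt ▸ htne)
  have hxyt : p.val = x :: y :: tt := by rw [hxt, hyt]
  rw [hxyt] at hchain; unfold List.Chain' at hchain; rw [List.isChain_cons_cons] at hchain
  have h3 : p.val.tail = y :: tt := by rw [htt, hyt]
  have h1 : ep (⟨p.val.tail, tail_path htne⟩ : PathQ M) = (enc Q).symm y := by
    exact congrArg (enc Q).symm (head_eq h3 _)
  have h2 : ep p = (enc Q).symm x := by rw [ep, head_eq hxyt]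
  rw [h1, h2]
  exact hchain.1

theorem tree_graph (M : MDP Q AP) [Fintype (PathQ M)] :
    IsTreeGraph (MDP.edge (M2 M)) (M2 M).init := by
  refine ⟨?_, ?_, ?_⟩
  · intro p hp
    rw [edge_iff] at hp
    exact p.2.1 hp.1.symm
  · intro p hproot
    have htne : p.val.tail ≠ [] := fun h => hproot (eq_root h)
    refine ⟨⟨p.val.tail, tail_path htne⟩, edge_tail htne, ?_⟩
    intro pp hpp
    rw [edge_iff] at hpp
    exact Subtype.ext hpp.1.symm
  · intro p
    obtain ⟨m, hm⟩ : ∃ m, p.val.length ≤ m := ⟨p.val.length, le_refl _⟩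
    induction m generalizing p with
    | zero => exact absurd (List.length_eq_zero_iff.mp (Nat.le_zero.mp hm)) p.2.1
    | succ m ih =>
      by_cases hroot : p = (M2 M).init
      · rw [hroot]
      · have htne : p.val.tail ≠ [] := fun h => hroot (eq_root h)
        have hlt : p.val.tail.length ≤ m := by
          have h0 := p.2.1
          obtain ⟨x, t, hxt⟩ := List.exists_cons_of_ne_nil h0
          rw [hxt] at hm ⊢
          simpa using Nat.succ_le_succ_iff.mp hm
        exact Relation.ReflTransGen.tail (ih ⟨p.val.tail, tail_path htne⟩ hlt) (edge_tail htne)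

/-- The "same endpoint" function on the disjoint sum. -/
def pt : (Q ⊕ PathQ M) → Q := Sum.elim id ep

theorem mass_toLeft (μ : SubProb Q) (A : Set (Q ⊕ PathQ M)) :
    (SubProb.toLeft μ : SubProb (Q ⊕ PathQ M)).mass A
      = ∑ q : Q, if Sum.inl q ∈ A then μ.val q else 0 := by
  rw [SubProb.mass, SubProb.toLeft, Fintype.sum_sum_type]
  simp [Set.indicator_apply]

theorem mass_toRight (ν : SubProb (PathQ M)) (A : Set (Q ⊕ PathQ M)) :
    (SubProb.toRight ν : SubProb (Q ⊕ PathQ M)).mass A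
      = ∑ pp : PathQ M, if Sum.inr pp ∈ A then ν.val pp else 0 := by
  rw [SubProb.mass, SubProb.toRight, Fintype.sum_sum_type]
  simp [Set.indicator_apply]

theorem mass_key {A : Set (Q ⊕ PathQ M)} (hA : RClosed (fun x y => pt x = pt y) A)
    (p : PathQ M) {μ : SubProb Q} (hμ : μ ∈ M.trans (ep p)) :
    (SubProb.toRight (pushP p μ) : SubProb (Q ⊕ PathQ M)).mass A
      = (SubProb.toLeft μ : SubProb (Q ⊕ PathQ M)).mass A := by
  have hmem : ∀ u v : Q ⊕ PathQ M, pt u = pt v → u ∈ A → v ∈ A := by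
    intro u v h hu
    rw [← hA]
    exact ⟨u, hu, h⟩
  have hiff : ∀ pp : PathQ M, (Sum.inr pp ∈ A ↔ Sum.inl (ep pp) ∈ A) := by
    intro pp
    exact ⟨hmem _ _ rfl, hmem _ _ rfl⟩
  rw [mass_toLeft, mass_toRight]
  rw [show (∑ pp : PathQ M, if Sum.inr pp ∈ A then (pushP p μ).val pp else 0)
      = ∑ pp : PathQ M, if ep pp ∈ {q | Sum.inl q ∈ A} then (pushP p μ).val pp else 0 from
    Finset.sum_congr rfl fun pp _ => by
      rw [show (Sum.inr pp ∈ A) = (ep pp ∈ {q | Sum.inl q ∈ A}) from propext (hiff pp)]]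
  exact sum_push_eq p hμ {q | Sum.inl q ∈ A}

theorem label_pt (x : Q ⊕ PathQ M) : (M.dsum (M2 M)).label x = M.label (pt x) := by
  cases x <;> rfl

theorem bisim (M : MDP Q AP) [Fintype (PathQ M)] : M.Bisim (M2 M) := by
  refine ⟨fun x y => pt x = pt y, ⟨⟨fun _ => rfl, Eq.symm, Eq.trans⟩, ?_⟩, ?_⟩
  · intro x y hxy
    constructor
    · rw [label_pt, label_pt, hxy]
    · intro μ hμ
      cases x with
      | inl a =>
        have hmu : μ ∈ (M.trans a).image SubProb.toLeft := hμ
        obtain ⟨μ₀, hμ₀, rfl⟩ := Finset.mem_image.mp hmu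
        cases y with
        | inl b =>
          have hab : a = b := hxy
          subst hab
          exact ⟨SubProb.toLeft μ₀, hμ, fun A _ => rfl⟩
        | inr p =>
          have hab : a = ep p := hxy
          subst hab
          refine ⟨SubProb.toRight (pushP p μ₀), ?_, ?_⟩
          · exact Finset.mem_image_of_mem _ (Finset.mem_image_of_mem _ hμ₀)
          · intro A hA
            exact (mass_key hA p hμ₀).symm
      | inr p =>
        have hmu : μ ∈ ((M.trans (ep p)).image (pushP p)).image SubProb.toRight := hμ
        obtain ⟨ν, hν, rfl⟩ := Finset.mem_image.mp hmu
        obtain ⟨μ₀, hμ₀, rfl⟩ := Finset.mem_image.mp hν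
        cases y with
        | inl b =>
          have hab : ep p = b := hxy
          subst hab
          refine ⟨SubProb.toLeft μ₀, Finset.mem_image_of_mem _ hμ₀, ?_⟩
          intro A hA
          exact mass_key hA p hμ₀
        | inr pq =>
          have hab : ep p = ep pq := hxy
          refine ⟨SubProb.toRight (pushP pq μ₀), ?_, ?_⟩
          · exact Finset.mem_image_of_mem _ (Finset.mem_image_of_mem _ (hab ▸ hμ₀))
          · intro A hA
            rw [mass_key hA p hμ₀, mass_key hA pq (hab ▸ hμ₀)]
  · show pt (Sum.inl M.init) = pt (Sum.inr (M2 M).init)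
    show M.init = ep (M2 M).init
    rw [ep]
    simp only [M2]
    rw [List.head_cons, Equiv.symm_apply_apply]

end Stmt12Aux

/-- If the unlabeled underlying graph of an MDP is acyclic, then there is an MDP whose
unlabeled underlying graph is a tree which is bisimilar to it. -/
theorem stmt12 {Q : Type u} {AP : Type w} [Fintype Q] (M : MDP Q AP)
    (hacyc : ∀ x : Q, ¬ Relation.TransGen (MDP.edge M) x x) :
    ∃ (Q₂ : Type) (i : Fintype Q₂) (M₂ : @MDP Q₂ i AP),
      IsTreeGraph (@MDP.edge Q₂ AP i M₂) M₂.init ∧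
      @MDP.Bisim Q Q₂ AP _ i M M₂ := by
  letI := Stmt12Aux.pathFintype M hacyc
  exact ⟨Stmt12Aux.PathQ M, inferInstance, Stmt12Aux.M2 M,
    Stmt12Aux.tree_graph M, Stmt12Aux.bisim M⟩
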